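/- The backward order-cancellation loop admits a closed form independent of its sequential execution: iterating the cancellation step for k = LT, LT−1, …, PTF+1 (where the surplus at step k is computed from the arrivals SA_i, i ≤ k, as currently stored) produces exactly the arrays SA'_k = SA_k − max(0, min(C_k − SSV, SA_k)) for PTF < k ≤ LT and SA'_i = SA_i for all other indices i, where C_k is the projected cumulative inventory computed from the ORIGINAL arrivals. Consequently 0 ≤ SA'_i ≤ SA_i for every index i, and the projected cumulative inventory after cancellation is at no day larger than before cancellation. -/

import Mathlib

/-- Projected cumulative inventory at day `k`: starting inventory plus all
standard and expedited arrivals up to day `k` minus all forecast demand up to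
day `k`. -/
noncomputable def projInv (x : ℝ) (SA EA c : ℕ → ℝ) (k : ℕ) : ℝ :=
  x + ∑ i ∈ Finset.range (k + 1), (SA i + EA i - c i)

/-- One order-cancellation step at day `k`: compute the surplus
`x̃ = projInv x SA EA c k − SSV` from the currently stored arrivals; if the
surplus is positive, reduce `SA k` by `min(x̃, SA k)`, otherwise leave `SA`
unchanged.  Only the entry at day `k` is modified. -/
noncomputable def cancelStep (x SSV : ℝ) (EA c : ℕ → ℝ) (k : ℕ)
    (SA : ℕ → ℝ) : ℕ → ℝ :=
  fun i =>
    if i = k then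
      if 0 < projInv x SA EA c k - SSV then
        SA k - min (projInv x SA EA c k - SSV) (SA k)
      else SA k
    else SA i

/-- The backward order-cancellation loop: perform the cancellation step for
`k = LT, LT − 1, …, PTF + 1`. -/
noncomputable def backwardCancel (x SSV : ℝ) (EA c : ℕ → ℝ) (PTF LT : ℕ)
    (SA : ℕ → ℝ) : ℕ → ℝ :=
  (List.range (LT - PTF)).foldl (fun A j => cancelStep x SSV EA c (LT - j) A) SA

lemma foldl_closed (PTF LT : ℕ) (x SSV : ℝ) (SA EA c : ℕ → ℝ)
    (hSA : ∀ i, 0 ≤ SA i) :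
    ∀ n, n ≤ LT - PTF →
      (List.range n).foldl (fun A j => cancelStep x SSV EA c (LT - j) A) SA =
      fun i => if LT - n < i ∧ i ≤ LT then
          SA i - max 0 (min (projInv x SA EA c i - SSV) (SA i)) else SA i := by
  intro n
  induction n with
  | zero =>
    intro _
    funext i
    simp only [List.range_zero, List.foldl_nil]
    rw [if_neg (by omega)]
  | succ n ih =>
    intro hn
    have hn' : n < LT - PTF := by omega
    have hnLT : n < LT := by omega
    rw [List.range_succ, List.foldl_append, ih (by omega)]
    set g : ℕ → ℝ := fun i => if LT - n < i ∧ i ≤ LT then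
        SA i - max 0 (min (projInv x SA EA c i - SSV) (SA i)) else SA i with hg
    have hproj : projInv x g EA c (LT - n) = projInv x SA EA c (LT - n) := by
      unfold projInv
      congr 1
      refine Finset.sum_congr rfl (fun i hi => ?_)
      have hi' : i ≤ LT - n := by simpa [Nat.lt_succ_iff] using Finset.mem_range.mp hi
      rw [hg]
      simp only [if_neg (by omega : ¬ (LT - n < i ∧ i ≤ LT))]
    funext i
    simp only [List.foldl_cons, List.foldl_nil, cancelStep]
    by_cases hik : i = LT - n
    · subst hik
      rw [if_pos rfl, hproj]
      have hcond : LT - (n+1) < LT - n ∧ LT - n ≤ LT := by omega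
      rw [if_pos hcond]
      by_cases hpos : 0 < projInv x SA EA c (LT - n) - SSV
      · rw [if_pos hpos]
        have hgk : g (LT - n) = SA (LT - n) := by
          rw [hg]; simp only [if_neg (by omega : ¬ (LT - n < LT - n ∧ LT - n ≤ LT))]
        rw [hgk,
          max_eq_right (le_min hpos.le (hSA (LT - n)))]
      · rw [if_neg hpos]
        have hgk : g (LT - n) = SA (LT - n) := by
          rw [hg]; simp only [if_neg (by omega : ¬ (LT - n < LT - n ∧ LT - n ≤ LT))]
        rw [hgk, max_eq_left ((min_le_left _ _).trans (not_lt.mp hpos))]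
        ring
    · rw [if_neg hik, hg]
      have : (LT - n < i ∧ i ≤ LT) ↔ (LT - (n+1) < i ∧ i ≤ LT) := by omega
      simp only [this]

/-- the backward order-cancellation loop admits a closed form
independent of its sequential execution: the resulting arrivals are
`SA' k = SA k − max(0, min(C_k − SSV, SA k))` for `PTF < k ≤ LT` (with `C_k`
computed from the original arrivals) and `SA' i = SA i` otherwise; consequently
`0 ≤ SA' i ≤ SA i` for every `i`, and the projected cumulative inventory after
cancellation is at no day larger than before cancellation. -/
theorem backward_cancellation_closed_form
    (PTF LT : ℕ) (hPL : PTF ≤ LT)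
    (x SSV : ℝ) (SA EA c : ℕ → ℝ)
    (hSA : ∀ i, 0 ≤ SA i) (hEA : ∀ i, 0 ≤ EA i) (hc : ∀ i, 0 ≤ c i)
    (SA' : ℕ → ℝ) (hSA' : SA' = backwardCancel x SSV EA c PTF LT SA) :
    (∀ k, PTF < k → k ≤ LT →
      SA' k = SA k - max 0 (min (projInv x SA EA c k - SSV) (SA k))) ∧
    (∀ i, i ≤ PTF ∨ LT < i → SA' i = SA i) ∧
    (∀ i, 0 ≤ SA' i ∧ SA' i ≤ SA i) ∧
    (∀ k, projInv x SA' EA c k ≤ projInv x SA EA c k) := by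
  have hform : SA' = fun i => if PTF < i ∧ i ≤ LT then
      SA i - max 0 (min (projInv x SA EA c i - SSV) (SA i)) else SA i := by
    rw [hSA', backwardCancel, foldl_closed PTF LT x SSV SA EA c hSA (LT - PTF) le_rfl]
    funext i
    have : (LT - (LT - PTF) < i ∧ i ≤ LT) ↔ (PTF < i ∧ i ≤ LT) := by omega
    simp only [this]
  have h3 : ∀ i, 0 ≤ SA' i ∧ SA' i ≤ SA i := by
    intro i
    rw [hform]
    dsimp only
    by_cases h : PTF < i ∧ i ≤ LT
    · rw [if_pos h]
      constructor
      · have : max 0 (min (projInv x SA EA c i - SSV) (SA i)) ≤ SA i :=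
          max_le (hSA i) (min_le_right _ _)
        linarith
      · have : 0 ≤ max 0 (min (projInv x SA EA c i - SSV) (SA i)) := le_max_left _ _
        linarith
    · rw [if_neg h]; exact ⟨hSA i, le_rfl⟩
  refine ⟨fun k h1 h2 => by rw [hform]; exact if_pos ⟨h1, h2⟩,
    fun i hi => by rw [hform]; exact if_neg (by omega), h3, fun k => ?_⟩
  unfold projInv
  refine add_le_add_right (Finset.sum_le_sum fun i _ => ?_) x
  have := (h3 i).2
  linarith
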